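/- The operator L defined on polynomials in (Z, conj Z) by L(Z) = -λZ, L(conj Z) = -λ conj Z, the diffusion chain rule, and Γ(Z,Z) = conj Z - Z^2, Γ(conj Z, conj Z) = Z - conj Z^2, Γ(Z, conj Z) = (1 - Z conj Z)/2, commutes with the rotation Z ↦ e^{iθ} Z if and only if e^{3iθ} = 1. Equivalently: the substitution Z ↦ jZ, conj Z ↦ conj(j) conj Z with j a primitive cube root of unity preserves all the structure relations, but Z ↦ e^{iθ}Z with e^{3iθ} ≠ 1 does not. -/

import Mathlib

/-- The deltoid structure relations are invariant under the rotation
`Z ↦ uZ`, `conj Z ↦ u⁻¹ conj Z` (with `|u| = 1`) if and only if `u^3 = 1`: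
the relation `Γ(Z,Z) = conj Z - Z^2` transforms to `u^2 Γ(Z,Z) = u⁻¹ conj Z - (uZ)^2`,
`Γ(conj Z, conj Z) = Z - conj Z^2` to `u⁻² Γ(conj Z,conj Z) = uZ - (u⁻¹ conj Z)^2`,
and `Γ(Z, conj Z) = (1 - Z conj Z)/2` is always preserved. -/
theorem deltoid_rotation_invariance (u : ℂ) (hu : ‖u‖ = 1) :
    ((∀ z w : ℂ, u ^ 2 * (w - z ^ 2) = u⁻¹ * w - (u * z) ^ 2)
      ∧ (∀ z w : ℂ, (u⁻¹) ^ 2 * (z - w ^ 2) = u * z - (u⁻¹ * w) ^ 2)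
      ∧ (∀ z w : ℂ, u * u⁻¹ * ((1 - z * w) / 2) = (1 - (u * z) * (u⁻¹ * w)) / 2))
    ↔ u ^ 3 = 1 := by
  have hu0 : u ≠ 0 := by
    intro h; simp [h] at hu
  constructor
  · rintro ⟨h1, -, -⟩
    have := h1 0 1
    have h2 : u ^ 2 = u⁻¹ := by simpa using this
    have : u ^ 3 = u * u⁻¹ := by rw [← h2]; ring
    rwa [mul_inv_cancel₀ hu0] at this
  · intro h3
    have hinv : u⁻¹ = u ^ 2 := by
      exact inv_eq_of_mul_eq_one_right (by linear_combination h3)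
    refine ⟨fun z w => ?_, fun z w => ?_, fun z w => ?_⟩
    · rw [hinv]; ring
    · rw [hinv]; linear_combination u * z * h3
    · rw [show (u*z)*(u⁻¹*w) = (u*u⁻¹)*(z*w) by ring, mul_inv_cancel₀ hu0]; ring
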